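/- With γ₁ < −1 < 0 < γ₂ the roots of γ(γ−θ) = 1/(Nρ) and U*(a) = (γ₂ e^{−γ₁(a*−a)} − γ₁ e^{−γ₂(a*−a)})/(γ₂−γ₁), the function U* is strictly decreasing on [0, a*) and satisfies U*(a) > 1 for all a ∈ [0, a*). -/

import Mathlib

/-- The cooperative stopping cutoff `a*`. -/
noncomputable def astarDef (γ₁ γ₂ : ℝ) : ℝ :=
  (Real.log (1 + 1 / γ₂) - Real.log (1 + 1 / γ₁)) / (γ₂ - γ₁)

/-- The cooperative normalized value on the exploration region. -/
noncomputable def UstarDef (γ₁ γ₂ astar : ℝ) (a : ℝ) : ℝ :=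
  (γ₂ * Real.exp (-γ₁ * (astar - a)) - γ₁ * Real.exp (-γ₂ * (astar - a))) / (γ₂ - γ₁)

/-- `U*` is strictly decreasing on `[0, a*)` and `U*(a) > 1` there. -/
theorem cooperative_value_decreasing (N ρ θ γ₁ γ₂ : ℝ) (hN : 1 ≤ N) (hρ : 0 < ρ)
    (hmain : N * ρ * (1 + θ) < 1)
    (hγ₁ : γ₁ < -1) (hγ₂ : 0 < γ₂)
    (hroot1 : γ₁ * (γ₁ - θ) = 1 / (N * ρ))
    (hroot2 : γ₂ * (γ₂ - θ) = 1 / (N * ρ)) :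
    StrictAntiOn (UstarDef γ₁ γ₂ (astarDef γ₁ γ₂)) (Set.Ico 0 (astarDef γ₁ γ₂)) ∧
    ∀ a ∈ Set.Ico 0 (astarDef γ₁ γ₂), 1 < UstarDef γ₁ γ₂ (astarDef γ₁ γ₂) a := by
  set s := astarDef γ₁ γ₂ with hs
  have hγ12 : γ₁ < γ₂ := by linarith
  have hne : (0 : ℝ) < γ₂ - γ₁ := by linarith
  have hd : ∀ x : ℝ, HasDerivAt (UstarDef γ₁ γ₂ s)
      ((γ₁ * γ₂ * (Real.exp (-γ₁ * (s - x)) - Real.exp (-γ₂ * (s - x)))) / (γ₂ - γ₁)) x := by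
    intro x
    have h1 : HasDerivAt (fun a : ℝ => Real.exp (-γ₁ * (s - a)))
        (Real.exp (-γ₁ * (s - x)) * (-γ₁ * -1)) x :=
      (((hasDerivAt_id x).const_sub s).const_mul (-γ₁)).exp
    have h2 : HasDerivAt (fun a : ℝ => Real.exp (-γ₂ * (s - a)))
        (Real.exp (-γ₂ * (s - x)) * (-γ₂ * -1)) x :=
      (((hasDerivAt_id x).const_sub s).const_mul (-γ₂)).exp
    have h := ((h1.const_mul γ₂).sub (h2.const_mul γ₁)).div_const (γ₂ - γ₁)
    refine h.congr_deriv ?_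
    ring
  have hanti : StrictAntiOn (UstarDef γ₁ γ₂ s) (Set.Icc 0 s) := by
    apply strictAntiOn_of_deriv_neg (convex_Icc 0 s)
    · exact fun x _ => (hd x).continuousAt.continuousWithinAt
    · intro x hx
      rw [interior_Icc] at hx
      rw [(hd x).deriv]
      have hsx : 0 < s - x := by linarith [hx.2]
      have hE : Real.exp (-γ₂ * (s - x)) < Real.exp (-γ₁ * (s - x)) := by
        apply Real.exp_lt_exp.2
        nlinarith
      have hprod : γ₁ * γ₂ < 0 := mul_neg_of_neg_of_pos (by linarith) hγ₂
      have hnum : γ₁ * γ₂ * (Real.exp (-γ₁ * (s - x)) - Real.exp (-γ₂ * (s - x))) < 0 :=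
        mul_neg_of_neg_of_pos hprod (by linarith)
      exact div_neg_of_neg_of_pos hnum hne
  have hfs : UstarDef γ₁ γ₂ s s = 1 := by
    rw [UstarDef, sub_self]
    simp only [mul_zero, Real.exp_zero, mul_one]
    field_simp
  constructor
  · exact hanti.mono Set.Ico_subset_Icc_self
  · intro a ha
    have h := hanti ⟨ha.1, le_of_lt ha.2⟩ ⟨le_trans ha.1 (le_of_lt ha.2), le_refl s⟩ ha.2
    rwa [hfs] at h
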